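/- arXiv:1506.08264 — 4 statements merged into one kernel-verified Lean document; each statement's English description precedes it below -/
import Mathlib

section
/- Let A be a symmetric positive-definite checkerboard matrix of size 2n+1 with a_{i,j} = (-1)^{(i-j)/2} a_{(i+j)/2,(i+j)/2} for i + j even. Let Ƃ be the 2nƗ2n matrix obtained from A by deleting the first row and the last column. Then Ƃ is skew-symmetric and invertible, hence det(Ƃ) > 0. -/
/-- A principal submatrix (along an injective map) of a positive definite
real matrix is positive definite. -/
lemma posDef_submatrix_of_injective {m n' : Type*} [Fintype m] [Fintype n']
    [DecidableEq m] [DecidableEq n'] {M : Matrix n' n' ℝ} (hM : M.PosDef)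
    {f : m → n'} (hf : Function.Injective f) :
    (M.submatrix f f).PosDef := by
  classical
  rw [Matrix.posDef_iff_dotProduct_mulVec] at hM ⊢
  constructor
  · show Matrix.conjTranspose (M.submatrix f f) = M.submatrix f f
    rw [Matrix.conjTranspose_submatrix, hM.1]
  · intro x hx
    set y : n' → ℝ := Function.extend f x 0 with hy
    have hyf : ∀ p, y (f p) = x p := fun p => hf.extend_apply x 0 p
    have key : ∀ g : n' → ℝ,
        ∑ l, g l * y l = ∑ p, g (f p) * x p := by
      intro g
      have h1 : (Finset.univ : Finset n').sum (fun l => g l * y l)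
          = (Finset.univ.image f).sum (fun l => g l * y l) := by
        symm
        apply Finset.sum_subset (Finset.subset_univ _)
        intro l _ hl
        have hnot : ¬ ∃ p, f p = l := by simpa [Finset.mem_image] using hl
        simp [hy, Function.extend_apply' _ _ _ hnot]
      rw [h1, Finset.sum_image (fun a _ b _ h => hf h)]
      simp only [hyf]
    have hy0 : y ≠ 0 := by
      obtain ⟨p, hp⟩ := Function.ne_iff.mp hx
      intro h
      apply hp
      have := congrFun h (f p)
      simpa [hyf p] using this
    have hpos := hM.2 (x := y) hy0
    have heq : dotProduct (star y) (M.mulVec y)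
        = dotProduct (star x) ((M.submatrix f f).mulVec x) := by
      simp only [dotProduct, Matrix.mulVec, star_trivial, Matrix.submatrix_apply]
      calc ∑ k, y k * ∑ l, M k l * y l
          = ∑ k, (∑ l, M k l * y l) * y k := by
            simp [mul_comm]
        _ = ∑ p, (∑ l, M (f p) l * y l) * x p := key _
        _ = ∑ p, (∑ q, M (f p) (f q) * x q) * x p := by
            refine Finset.sum_congr rfl fun p _ => ?_
            rw [key (fun l => M (f p) l)]
        _ = ∑ p, x p * ∑ q, M (f p) (f q) * x q := by
            simp [mul_comm]
    rw [heq] at hpos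
    exact hpos

/-- The interleaving equivalence `Fin n ⊕ Fin n ≃ Fin (2*n)`. -/
def interEquiv (n : ℕ) : Fin n ⊕ Fin n ≃ Fin (2*n) where
  toFun s := Sum.rec (fun p => ⟨2*p, by omega⟩) (fun p => ⟨2*p+1, by omega⟩) s
  invFun k := if h : (k : ℕ) % 2 = 0 then Sum.inl ⟨k/2, by have := k.isLt; omega⟩
    else Sum.inr ⟨k/2, by have := k.isLt; omega⟩
  left_inv s := by
    rcases s with p | p
    · dsimp only
      rw [dif_pos (by omega)]
      congr 1
      exact Fin.ext (by dsimp only; omega)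
    · dsimp only
      rw [dif_neg (by omega)]
      congr 1
      exact Fin.ext (by dsimp only; omega)
  right_inv k := by
    dsimp only
    by_cases h : (k : ℕ) % 2 = 0
    · rw [dif_pos h]
      exact Fin.ext (by dsimp only; omega)
    · rw [dif_neg h]
      exact Fin.ext (by dsimp only; omega)

lemma neg_one_zpow_skew (d : ℝ) {e1 e2 : ℤ} (h : e1 + e2 = 1) :
    (-1 : ℝ) ^ e1 * d = -((-1 : ℝ) ^ e2 * d) := by
  have hts : (-1 : ℝ) ^ e1 * (-1 : ℝ) ^ e2 = -1 := by
    rw [← zpow_add₀ (by norm_num : (-1:ℝ) ≠ 0), h, zpow_one]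
  have hss : (-1 : ℝ) ^ e2 * (-1 : ℝ) ^ e2 = 1 := by
    rw [← zpow_add₀ (by norm_num : (-1:ℝ) ≠ 0)]
    have : e2 + e2 = 2 * e2 := by ring
    rw [this, zpow_mul]
    norm_num
  set s := (-1 : ℝ) ^ e1
  set t := (-1 : ℝ) ^ e2
  linear_combination d * t * hts - d * s * hss

theorem deleted_submatrix_skew_invertible (n : ℕ)
    (A : Matrix (Fin (2*n+1)) (Fin (2*n+1)) ℝ)
    (hpd : A.PosDef)
    (hcheck : ∀ i j : Fin (2*n+1), Odd ((i : ℕ) + (j : ℕ)) → A i j = 0)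
    (hstruct : ∀ i j : Fin (2*n+1), Even ((i : ℕ) + (j : ℕ)) →
      A i j = (-1 : ℝ) ^ ((((i : ℕ) : ℤ) - ((j : ℕ) : ℤ)) / 2) *
        A ⟨((i : ℕ) + (j : ℕ)) / 2, by have := i.isLt; have := j.isLt; omega⟩
          ⟨((i : ℕ) + (j : ℕ)) / 2, by have := i.isLt; have := j.isLt; omega⟩) :
    Matrix.transpose (A.submatrix Fin.succ Fin.castSucc) = -(A.submatrix Fin.succ Fin.castSucc) ∧
    IsUnit (A.submatrix Fin.succ Fin.castSucc) ∧
    0 < (A.submatrix Fin.succ Fin.castSucc).det := by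
  classical
  set B := A.submatrix Fin.succ Fin.castSucc with hB
  -- skew-symmetry
  have hskew : ∀ i j : Fin (2*n), B j i = -(B i j) := by
    intro i j
    have hji : (B j i) = A j.succ i.castSucc := rfl
    have hij : (B i j) = A i.succ j.castSucc := rfl
    rw [hji, hij]
    rcases Nat.even_or_odd ((i : ℕ) + (j : ℕ)) with hpar | hpar
    · -- both entries are zero
      obtain ⟨c, hc⟩ := hpar
      rw [hcheck j.succ i.castSucc (by
          rw [Nat.odd_iff]; simp only [Fin.val_succ, Fin.coe_castSucc]; omega),
        hcheck i.succ j.castSucc (by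
          rw [Nat.odd_iff]; simp only [Fin.val_succ, Fin.coe_castSucc]; omega)]
      simp
    · -- use the structure hypothesis
      obtain ⟨c, hc⟩ := hpar
      have h1 := hstruct j.succ i.castSucc (by
        rw [Nat.even_iff]; simp only [Fin.val_succ, Fin.coe_castSucc]; omega)
      have h2 := hstruct i.succ j.castSucc (by
        rw [Nat.even_iff]; simp only [Fin.val_succ, Fin.coe_castSucc]; omega)
      simp only [Fin.val_succ, Fin.coe_castSucc] at h1 h2
      rw [h1, h2]
      have hmid : (((j:ℕ)+1+(i:ℕ))/2 : ℕ) = (((i:ℕ)+1+(j:ℕ))/2 : ℕ) := by omega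
      obtain ⟨k, hk⟩ : ∃ k : ℤ, ((j:ℕ):ℤ) + 1 - ((i:ℕ):ℤ) = 2 * k :=
        ⟨((j:ℕ):ℤ) - c, by omega⟩
      have he1 : (((j:ℕ):ℤ) + 1 - ((i:ℕ):ℤ)) / 2 = k := by omega
      have he2 : (((i:ℕ):ℤ) + 1 - ((j:ℕ):ℤ)) / 2 = 1 - k := by omega
      have congrA : A ⟨((j:ℕ)+1+(i:ℕ))/2, by have := i.isLt; have := j.isLt; omega⟩
          ⟨((j:ℕ)+1+(i:ℕ))/2, by have := i.isLt; have := j.isLt; omega⟩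
          = A ⟨((i:ℕ)+1+(j:ℕ))/2, by have := i.isLt; have := j.isLt; omega⟩
          ⟨((i:ℕ)+1+(j:ℕ))/2, by have := i.isLt; have := j.isLt; omega⟩ := by
        congr 1 <;> exact Fin.ext hmid
      rw [show (((j:ℕ):ℤ)+1 - ((i:ℕ):ℤ)) = (((j:ℕ)+1 : ℕ) : ℤ) - ((i:ℕ):ℤ) by push_cast; ring] at he1
      rw [show (((i:ℕ):ℤ)+1 - ((j:ℕ):ℤ)) = (((i:ℕ)+1 : ℕ) : ℤ) - ((j:ℕ):ℤ) by push_cast; ring] at he2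
      rw [he1, he2, congrA]
      exact neg_one_zpow_skew _ (by omega)
  -- the odd principal submatrix
  have hg : ∀ p : Fin n, 2*(p:ℕ)+1 < 2*n+1 := fun p => by have := p.isLt; omega
  set g : Fin n → Fin (2*n+1) := fun p => ⟨2*(p:ℕ)+1, hg p⟩ with hgdef
  have hginj : Function.Injective g := by
    intro a b h
    have := congrArg Fin.val h
    simp only [hgdef] at this
    exact Fin.ext (by omega)
  set X := A.submatrix g g with hXdef
  have hXpd : X.PosDef := posDef_submatrix_of_injective hpd hginj
  have hXdet : 0 < X.det := hXpd.det_pos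
  have hsymA : ∀ i j, A i j = A j i := by
    intro i j
    have h := congrFun (congrFun hpd.1 i) j
    rw [Matrix.conjTranspose_apply] at h
    simpa using h.symm
  have hblock : B.submatrix (interEquiv n) (interEquiv n)
      = Matrix.fromBlocks 0 X (-X) 0 := by
    ext s t
    rcases s with p | p <;> rcases t with q | q
    · show B ⟨2*(p:ℕ), by have := p.isLt; omega⟩ ⟨2*(q:ℕ), by have := q.isLt; omega⟩
        = Matrix.fromBlocks 0 X (-X) 0 (Sum.inl p) (Sum.inl q)
      rw [Matrix.fromBlocks_apply₁₁]
      show A _ _ = (0 : Matrix (Fin n) (Fin n) ℝ) p q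
      rw [hcheck _ _ (by
        rw [Nat.odd_iff]; simp only [Fin.val_succ, Fin.coe_castSucc]; omega)]
      simp
    · show B ⟨2*(p:ℕ), by have := p.isLt; omega⟩ ⟨2*(q:ℕ)+1, by have := q.isLt; omega⟩
        = Matrix.fromBlocks 0 X (-X) 0 (Sum.inl p) (Sum.inr q)
      rw [Matrix.fromBlocks_apply₁₂]
      show A _ _ = A (g p) (g q)
      congr 1 <;> exact Fin.ext (by simp [hgdef])
    · show B ⟨2*(p:ℕ)+1, by have := p.isLt; omega⟩ ⟨2*(q:ℕ), by have := q.isLt; omega⟩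
        = Matrix.fromBlocks 0 X (-X) 0 (Sum.inr p) (Sum.inl q)
      rw [Matrix.fromBlocks_apply₂₁]
      have h1 := hskew (⟨2*(q:ℕ), by have := q.isLt; omega⟩ : Fin (2*n))
        (⟨2*(p:ℕ)+1, by have := p.isLt; omega⟩ : Fin (2*n))
      rw [h1]
      show -(A _ _) = (-X) p q
      have h2 : A (Fin.succ (⟨2*(q:ℕ), by have := q.isLt; omega⟩ : Fin (2*n)))
          (Fin.castSucc (⟨2*(p:ℕ)+1, by have := p.isLt; omega⟩ : Fin (2*n)))
          = A (g q) (g p) := by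
        congr 1 <;> exact Fin.ext (by simp [hgdef])
      rw [h2, hsymA (g q) (g p)]
      simp [hXdef]
    · show B ⟨2*(p:ℕ)+1, by have := p.isLt; omega⟩ ⟨2*(q:ℕ)+1, by have := q.isLt; omega⟩
        = Matrix.fromBlocks 0 X (-X) 0 (Sum.inr p) (Sum.inr q)
      rw [Matrix.fromBlocks_apply₂₂]
      show A _ _ = (0 : Matrix (Fin n) (Fin n) ℝ) p q
      rw [hcheck _ _ (by
        rw [Nat.odd_iff]; simp only [Fin.val_succ, Fin.coe_castSucc]; omega)]
      simp
  have hdetB : B.det = X.det * X.det := by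
    have h0 : B.det = (B.submatrix (interEquiv n) (interEquiv n)).det :=
      (Matrix.det_submatrix_equiv_self (interEquiv n) B).symm
    rw [h0, hblock]
    have hfac : (Matrix.fromBlocks (0 : Matrix (Fin n) (Fin n) ℝ) X (-X) 0)
        = (Matrix.fromBlocks X 0 0 X) * (Matrix.fromBlocks 1 1 0 1) *
          (Matrix.fromBlocks 1 0 (-1) 1) * (Matrix.fromBlocks 1 1 0 1) := by
      rw [Matrix.fromBlocks_multiply, Matrix.fromBlocks_multiply,
        Matrix.fromBlocks_multiply]
      congr 1 <;> first | (ext a b; simp [Matrix.mul_apply]) | skip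
    rw [hfac, Matrix.det_mul, Matrix.det_mul, Matrix.det_mul,
      Matrix.det_fromBlocks_zero₂₁, Matrix.det_fromBlocks_zero₂₁,
      Matrix.det_fromBlocks_zero₁₂]
    simp
  have hdetpos : 0 < B.det := by
    rw [hdetB]; exact mul_pos hXdet hXdet
  refine ⟨?_, ?_, ?_⟩
  · ext i j
    exact hskew i j
  · exact (Matrix.isUnit_iff_isUnit_det B).2 (isUnit_iff_ne_zero.2 hdetpos.ne')
  · exact hdetpos
end

section
/- For every N ≄ 1, the combinatorial identity āˆ‘_{k=0}^{N-1} C(2N, 2k) · (-1)^{N-k} (2N-2k-1)!/(2^{2N-2k-1}(N-1-k)!) · (2k)!/(2^{2k} k!) = āˆ’(2N)!/(2^{2N} N!) holds. -/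
lemma term_eq (k a : ℕ) :
    (((2*k+2*a+2).choose (2*k)) : ℝ) * (((2*a+1).factorial : ℝ) /
      (2 ^ (2*a+1) * ((a).factorial : ℝ))) *
      (((2*k).factorial : ℝ) / (2 ^ (2*k) * ((k).factorial : ℝ)))
    = (((2*k+2*a+2).factorial : ℝ)) / (2 ^ (2*k+2*a+2) * (((k+a+1).factorial : ℝ)))
        * (((k+a+1).choose k) : ℝ) := by
  have F1 : (2*k+2*a+2).choose (2*k) * (2*k).factorial * (2*a+2).factorial
      = (2*k+2*a+2).factorial := by
    have := Nat.choose_mul_factorial_mul_factorial (show 2*k ≤ 2*k+2*a+2 by omega)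
    simpa [show 2*k+2*a+2 - 2*k = 2*a+2 by omega] using this
  have F2 : (k+a+1).choose k * k.factorial * (a+1).factorial = (k+a+1).factorial := by
    have := Nat.choose_mul_factorial_mul_factorial (show k ≤ k+a+1 by omega)
    simpa [show k+a+1 - k = a+1 by omega] using this
  have F3 : (2*a+2).factorial = (2*a+2) * (2*a+1).factorial := rfl
  have F4 : (a+1).factorial = (a+1) * a.factorial := rfl
  have P : (2:ℝ) ^ (2*k+2*a+2) = 2^(2*k) * 2^(2*a+1) * 2 := by
    rw [show 2*k+2*a+2 = (2*k)+((2*a+1)+1) by omega, pow_add, pow_add, pow_one]; ring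
  have h1 : ((2*a+1).factorial : ℝ) ≠ 0 := Nat.cast_ne_zero.2 (Nat.factorial_ne_zero _)
  have h2 : (a.factorial : ℝ) ≠ 0 := Nat.cast_ne_zero.2 (Nat.factorial_ne_zero _)
  have h3 : (k.factorial : ℝ) ≠ 0 := Nat.cast_ne_zero.2 (Nat.factorial_ne_zero _)
  have h4 : ((k+a+1).factorial : ℝ) ≠ 0 := Nat.cast_ne_zero.2 (Nat.factorial_ne_zero _)
  have C1 : ((2*k+2*a+2).factorial : ℝ)
      = (((2*k+2*a+2).choose (2*k)) : ℝ) * (2*k).factorial * ((2*(a:ℝ)+2) * (2*a+1).factorial) := by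
    rw [← F1, F3]; push_cast; ring
  have C2 : ((k+a+1).factorial : ℝ)
      = (((k+a+1).choose k) : ℝ) * k.factorial * (((a:ℝ)+1) * a.factorial) := by
    rw [← F2, F4]; push_cast; ring
  rw [P]
  field_simp
  rw [C1, C2]
  ring

theorem combinatorial_identity (N : ℕ) (hN : 1 ≤ N) :
    ∑ k ∈ Finset.range N,
      ((2*N).choose (2*k) : ℝ) *
        ((-1 : ℝ) ^ (N-k) * (Nat.factorial (2*N-2*k-1)) /
          (2 ^ (2*N-2*k-1) * (Nat.factorial (N-1-k)))) *
        ((Nat.factorial (2*k)) / (2 ^ (2*k) * (Nat.factorial k)))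
      = -(Nat.factorial (2*N)) / (2 ^ (2*N) * (Nat.factorial N)) := by
  have step : ∑ k ∈ Finset.range N,
      ((2*N).choose (2*k) : ℝ) *
        ((-1 : ℝ) ^ (N-k) * (Nat.factorial (2*N-2*k-1)) /
          (2 ^ (2*N-2*k-1) * (Nat.factorial (N-1-k)))) *
        ((Nat.factorial (2*k)) / (2 ^ (2*k) * (Nat.factorial k)))
      = ∑ k ∈ Finset.range N,
        ((Nat.factorial (2*N) : ℝ) / (2 ^ (2*N) * (Nat.factorial N)))
          * ((-1:ℝ)^(N-k) * (N.choose k)) := by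
    refine Finset.sum_congr rfl (fun k hk => ?_)
    have hk' : k < N := Finset.mem_range.1 hk
    obtain ⟨a, ha⟩ := Nat.exists_eq_add_of_lt hk'
    subst ha
    have e1 : 2*(k+a+1)-2*k-1 = 2*a+1 := by omega
    have e2 : (k+a+1)-1-k = a := by omega
    have e3 : (k+a+1)-k = a+1 := by omega
    have e4 : 2*(k+a+1) = 2*k+2*a+2 := by omega
    rw [e1, e2, e3, e4]
    linear_combination ((-1:ℝ)^(a+1)) * term_eq k a
  rw [step, ← Finset.mul_sum]
  have hS : ∑ k ∈ Finset.range N, ((-1:ℝ)^(N-k) * (N.choose k)) = -1 := by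
    have base : ∑ k ∈ Finset.range (N+1), ((-1:ℝ)^k * (N.choose k)) = 0 := by
      have := Int.alternating_sum_range_choose (n := N)
      have hN0 : N ≠ 0 := by omega
      rw [if_neg hN0] at this
      exact_mod_cast congrArg (Int.cast (R := ℝ)) this
    have hsum : ∑ k ∈ Finset.range N, ((-1:ℝ)^k * (N.choose k)) = -(-1:ℝ)^N := by
      rw [Finset.sum_range_succ] at base
      simp at base
      linarith [base]
    have h2 : ∑ k ∈ Finset.range N, ((-1:ℝ)^(N-k) * (N.choose k))
        = (-1:ℝ)^N * ∑ k ∈ Finset.range N, ((-1:ℝ)^k * (N.choose k)) := by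
      rw [Finset.mul_sum]
      refine Finset.sum_congr rfl (fun k hk => ?_)
      have hk' : k < N := Finset.mem_range.1 hk
      have hp : (-1:ℝ)^(N-k) * (-1:ℝ)^k = (-1:ℝ)^N := by
        rw [← pow_add]; congr 1; omega
      have hq : (-1:ℝ)^k * (-1:ℝ)^k = 1 := by
        rw [← pow_add, ← two_mul, pow_mul]; norm_num
      calc (-1:ℝ)^(N-k) * (N.choose k)
          = ((-1:ℝ)^(N-k) * ((-1:ℝ)^k * (-1:ℝ)^k)) * (N.choose k) := by rw [hq, mul_one]
        _ = ((-1:ℝ)^(N-k) * (-1:ℝ)^k) * ((-1:ℝ)^k * (N.choose k)) := by ring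
        _ = (-1:ℝ)^N * ((-1:ℝ)^k * (N.choose k)) := by rw [hp]
    rw [h2, hsum]
    rw [mul_neg, ← pow_add, ← two_mul, pow_mul]
    norm_num
  rw [hS]
  ring
end

section
/- Let φ̃ ∈ C^k(𝕋, ℝ) be a kernel on the torus, and for 0 ≤ j ≤ k set φ_j = φ̃^{(j)}. Then the family (φ_0, …, φ_k) is linearly independent in L²(𝕋) if and only if φ̃ has at least k+1 non-zero Fourier coefficients. -/
open Filter intervalIntegral

namespace DLIF

open Complex MeasureTheory Real Set Function

noncomputable def cI (f : ℝ → ℂ) (n : ℤ) : ℂ :=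
  ∫ x in (0:ℝ)..1, f x * Complex.exp (-(2 * Real.pi * (n : ℝ) * x : ℝ) * Complex.I)

lemma cI_eq (f : ℝ → ℂ) (n : ℤ) :
    cI f n = fourierCoeffOn zero_lt_one f n := by
  rw [fourierCoeffOn_eq_integral]
  norm_num
  apply intervalIntegral.integral_congr
  intro x hx
  simp only []
  rw [mul_comm]
  congr 1
  rw [← Complex.exp_conj]
  congr 1
  simp [map_mul, Complex.conj_I, Complex.conj_ofReal, Complex.conj_ofNat]
  ring

lemma periodic_deriv' {E : Type*} [NormedAddCommGroup E] [NormedSpace ℝ E] {f : ℝ → E} {c : ℝ}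
    (h : Function.Periodic f c) : Function.Periodic (deriv f) c := by
  intro x
  have h2 : deriv (fun y => f (y + c)) x = deriv f x := by
    congr 1; funext y; exact h y
  rw [← h2, deriv_comp_add_const]

lemma periodic_iteratedDeriv {f : ℝ → ℝ} {c : ℝ} (h : Function.Periodic f c) (j : ℕ) :
    Function.Periodic (iteratedDeriv j f) c := by
  induction j with
  | zero => simpa using h
  | succ j ih => rw [iteratedDeriv_succ]; exact periodic_deriv' ih


lemma cI_deriv {f : ℝ → ℝ} (hdiff : Differentiable ℝ f) (hcont : Continuous (deriv f))
    (hper : Function.Periodic f 1) (n : ℤ) :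
    cI (fun x => ((deriv f x : ℝ) : ℂ)) n = (2 * Real.pi * Complex.I * n) * cI (fun x => (f x : ℂ)) n := by
  rw [cI_eq, cI_eq]
  rcases eq_or_ne n 0 with rfl | hn
  · simp only [Int.cast_zero, mul_zero, zero_mul]
    rw [fourierCoeffOn_eq_integral]
    norm_num
    have h1 : (∫ x in (0:ℝ)..1, (((deriv f x : ℝ) : ℂ))) = ((∫ x in (0:ℝ)..1, deriv f x : ℝ) : ℂ) :=
      intervalIntegral.integral_ofReal
    rw [h1, intervalIntegral.integral_deriv_eq_sub (fun x _ => hdiff x)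
      (hcont.intervalIntegrable 0 1)]
    have := hper 0
    rw [zero_add] at this
    simp [this]
  · have key := fourierCoeffOn_of_hasDerivAt zero_lt_one hn
      (f := fun x => (f x : ℂ)) (f' := fun x => ((deriv f x : ℝ) : ℂ))
      (fun x _ => ((hdiff x).hasDerivAt).ofReal_comp)
      ((Complex.continuous_ofReal.comp hcont).intervalIntegrable 0 1)
    have hper0 : ((f 1 : ℂ)) - ((f 0 : ℂ)) = 0 := by
      have := hper 0
      rw [zero_add] at this
      simp [this]
    rw [hper0, mul_zero, zero_sub] at key
    have hnz : (-2 * (Real.pi : ℂ) * Complex.I * n) ≠ 0 := by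
      simp [Real.pi_ne_zero, Complex.I_ne_zero, hn]
    field_simp at key
    simp only [Complex.ofReal_one, Complex.ofReal_zero, sub_zero, one_mul] at key
    linear_combination -key


lemma cI_iteratedDeriv {k : ℕ} {phi : ℝ → ℝ} (hsmooth : ContDiff ℝ ((k : ℕ) : ℕ∞) phi)
    (hper : Function.Periodic phi 1) :
    ∀ j : ℕ, j ≤ k → ∀ n : ℤ,
      cI (fun x => ((iteratedDeriv j phi x : ℝ) : ℂ)) n
        = (2 * Real.pi * Complex.I * n) ^ j * cI (fun x => ((phi x : ℝ) : ℂ)) n := by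
  intro j
  induction j with
  | zero => intro _ n; simp [iteratedDeriv_zero]
  | succ j ih =>
    intro hj n
    have hj' : j ≤ k := Nat.le_of_succ_le hj
    have hdiff : Differentiable ℝ (iteratedDeriv j phi) :=
      hsmooth.differentiable_iteratedDeriv j (by exact_mod_cast Nat.lt_of_succ_le hj)
    have hcont : Continuous (deriv (iteratedDeriv j phi)) := by
      rw [← iteratedDeriv_succ]
      exact hsmooth.continuous_iteratedDeriv (j+1) (by exact_mod_cast hj)
    have hperj := periodic_iteratedDeriv hper j
    have key := cI_deriv hdiff hcont hperj n
    simp only [iteratedDeriv_succ]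
    rw [key, ih hj' n, pow_succ]
    ring


lemma eq_zero_of_cI_zero {f : ℝ → ℂ} (hcont : Continuous f) (hper : Function.Periodic f 1)
    (h0 : ∀ n : ℤ, cI f n = 0) (x : ℝ) : f x = 0 := by
  haveI : Fact (0 < (1:ℝ)) := ⟨one_pos⟩
  have hend : f 0 = f (0 + 1) := (hper 0).symm
  set F : C(AddCircle (1:ℝ), ℂ) := ⟨AddCircle.liftIco 1 0 f,
    AddCircle.liftIco_continuous hend hcont.continuousOn⟩ with hF
  have hFcoeff : ∀ n : ℤ, fourierCoeff (F : AddCircle (1:ℝ) → ℂ) n = 0 := by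
    intro n
    have heq : (F : AddCircle (1:ℝ) → ℂ) = AddCircle.liftIco 1 0 f := rfl
    rw [heq, fourierCoeff_liftIco_eq]
    have hn := h0 n
    rw [cI_eq] at hn
    simpa only [zero_add] using hn
  set fL := ContinuousMap.toLp (E := ℂ) 2 AddCircle.haarAddCircle ℂ F with hfL
  have hLcoeff : ∀ n : ℤ, fourierCoeff (fL : AddCircle (1:ℝ) → ℂ) n = 0 := by
    intro n
    rw [hfL, fourierCoeff_toLp]
    exact hFcoeff n
  have hsum := tsum_sq_fourierCoeff fL
  have hzero : (∫ t : AddCircle (1:ℝ), ‖(fL : AddCircle (1:ℝ) → ℂ) t‖ ^ 2 ∂AddCircle.haarAddCircle) = 0 := by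
    rw [← hsum]
    simp [hLcoeff]
  have hae : (fL : AddCircle (1:ℝ) → ℂ) =ᵐ[AddCircle.haarAddCircle] (F : AddCircle (1:ℝ) → ℂ) :=
    ContinuousMap.coeFn_toLp AddCircle.haarAddCircle F
  have hzero2 : (∫ t : AddCircle (1:ℝ), ‖(F : AddCircle (1:ℝ) → ℂ) t‖ ^ 2 ∂AddCircle.haarAddCircle) = 0 := by
    rw [← hzero]
    apply MeasureTheory.integral_congr_ae
    filter_upwards [hae] with t ht
    rw [ht]
  have hintegrable : Integrable (fun t : AddCircle (1:ℝ) => ‖(F : AddCircle (1:ℝ) → ℂ) t‖ ^ 2)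
      AddCircle.haarAddCircle := by
    have := (((F.continuous.norm).pow 2).continuousOn (s := Set.univ)).integrableOn_compact
      (μ := AddCircle.haarAddCircle) isCompact_univ
    rwa [integrableOn_univ] at this
  have haeF : (fun t : AddCircle (1:ℝ) => ‖(F : AddCircle (1:ℝ) → ℂ) t‖ ^ 2)
      =ᵐ[AddCircle.haarAddCircle] (fun _ => (0:ℝ)) := by
    have := (integral_eq_zero_iff_of_nonneg_ae
      (Eventually.of_forall (fun t => by positivity)) hintegrable).mp hzero2
    filter_upwards [this] with t ht using ht
  have hFzero : ∀ t, (F : AddCircle (1:ℝ) → ℂ) t = 0 := by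
    have heq : (fun t : AddCircle (1:ℝ) => ‖(F : AddCircle (1:ℝ) → ℂ) t‖ ^ 2)
        = (fun _ => (0:ℝ)) :=
      (Continuous.ae_eq_iff_eq AddCircle.haarAddCircle
        ((F.continuous.norm).pow 2) continuous_const).mp haeF
    intro t
    have := congrFun heq t
    norm_num at this
    simpa using this
  have hx1 : f (Int.fract x) = f x := by
    have := hper.sub_int_mul_eq (x := x) (n := ⌊x⌋)
    rwa [mul_one] at this
  rw [← hx1]
  have hmem : Int.fract x ∈ Set.Ico (0:ℝ) (0 + 1) := by
    rw [zero_add]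
    exact ⟨Int.fract_nonneg x, Int.fract_lt_one x⟩
  have := AddCircle.liftIco_coe_apply (f := f) (p := (1:ℝ)) (a := (0:ℝ)) hmem
  rw [← this]
  exact hFzero _


lemma cI_const_mul (g : ℝ → ℂ) (a : ℂ) (n : ℤ) :
    cI (fun x => a * g x) n = a * cI g n := by
  unfold cI
  simp_rw [mul_assoc]
  exact intervalIntegral.integral_const_mul a _

lemma cI_sum {m : ℕ} (u : Fin m → ℝ → ℂ) (hu : ∀ j, Continuous (u j)) (n : ℤ) :
    cI (fun x => ∑ j : Fin m, u j x) n = ∑ j : Fin m, cI (u j) n := by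
  unfold cI
  simp_rw [Finset.sum_mul]
  exact intervalIntegral.integral_finset_sum (fun j _ =>
    ((hu j).mul (Complex.continuous_exp.comp (by continuity))).intervalIntegrable 0 1)

lemma cI_zero (n : ℤ) : cI (fun _ => (0:ℂ)) n = 0 := by
  unfold cI
  simp


/-- If a complex combination of the derivatives vanishes pointwise on [stuff], its
"Fourier transform" identity. -/
lemma sum_coeff {k : ℕ} {phi : ℝ → ℝ} (hsmooth : ContDiff ℝ ((k : ℕ) : ℕ∞) phi)
    (hper : Function.Periodic phi 1) (a : Fin (k+1) → ℂ) (n : ℤ) :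
    cI (fun x => ∑ j : Fin (k+1), a j * ((iteratedDeriv (j:ℕ) phi x : ℝ) : ℂ)) n
      = (∑ j : Fin (k+1), a j * (2 * Real.pi * Complex.I * n) ^ (j:ℕ))
        * cI (fun x => ((phi x : ℝ) : ℂ)) n := by
  have hcontj : ∀ j : Fin (k+1), Continuous (iteratedDeriv (j:ℕ) phi) := fun j =>
    hsmooth.continuous_iteratedDeriv (j:ℕ) (by exact_mod_cast Nat.lt_succ_iff.mp j.isLt)
  rw [cI_sum (fun j x => a j * ((iteratedDeriv (j:ℕ) phi x : ℝ) : ℂ))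
    (fun j => continuous_const.mul (Complex.continuous_ofReal.comp (hcontj j)))]
  rw [Finset.sum_mul]
  apply Finset.sum_congr rfl
  intro j _
  rw [cI_const_mul, cI_iteratedDeriv hsmooth hper (j:ℕ) (Nat.lt_succ_iff.mp j.isLt) n]
  ring

end DLIF


open DLIF Complex in
/-- For a C^k periodic kernel on the torus, the derivatives (phi, phi', ..., phi^(k))
are linearly independent in L^2 iff phi has at least k+1 nonzero Fourier coefficients. -/
theorem derivatives_linearIndependent_iff_fourier (k : ℕ) (phi : ℝ → ℝ)
    (hsmooth : ContDiff ℝ ((k : ℕ) : ℕ∞) phi)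
    (hper : Function.Periodic phi 1) :
    LinearIndependent ℝ (fun j : Fin (k+1) => iteratedDeriv (j : ℕ) phi) ↔
      ∃ s : Finset ℤ, k + 1 ≤ s.card ∧ ∀ n ∈ s,
        (∫ x in (0:ℝ)..1,
          (phi x : ℂ) * Complex.exp (-(2 * Real.pi * (n : ℝ) * x : ℝ) * Complex.I)) ≠ 0 := by
  classical
  have hint_eq : ∀ n : ℤ,
      (∫ x in (0:ℝ)..1,
        (phi x : ℂ) * Complex.exp (-(2 * Real.pi * (n : ℝ) * x : ℝ) * Complex.I))
      = cI (fun x => ((phi x : ℝ) : ℂ)) n := fun n => rfl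
  set c : ℤ → ℂ := cI (fun x => ((phi x : ℝ) : ℂ)) with hcdef
  have hcontj : ∀ j : Fin (k+1), Continuous (iteratedDeriv (j:ℕ) phi) := fun j =>
    hsmooth.continuous_iteratedDeriv (j:ℕ) (by exact_mod_cast Nat.lt_succ_iff.mp j.isLt)
  -- main computation: if a complex combination vanishes pointwise then coefficients relation
  have key : ∀ a : Fin (k+1) → ℂ,
      (∀ x : ℝ, ∑ j : Fin (k+1), a j * ((iteratedDeriv (j:ℕ) phi x : ℝ) : ℂ) = 0) →
      ∀ n : ℤ, (∑ j : Fin (k+1), a j * (2 * Real.pi * Complex.I * n) ^ (j:ℕ)) * c n = 0 := by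
    intro a ha n
    rw [← sum_coeff hsmooth hper a n]
    have hfun : (fun x => ∑ j : Fin (k+1), a j * ((iteratedDeriv (j:ℕ) phi x : ℝ) : ℂ))
        = fun _ => (0:ℂ) := funext ha
    rw [hfun, cI_zero]
  constructor
  · -- LI → many nonzero coefficients
    intro hLI
    by_contra hno
    push_neg at hno
    -- set of nonzero coefficients is finite with ≤ k elements
    have hSfin : {n : ℤ | c n ≠ 0}.Finite := by
      by_contra hinf
      obtain ⟨t, hts, htc⟩ := Set.Infinite.exists_subset_card_eq hinf (k+1)
      obtain ⟨n, hnt, hn0⟩ := hno t htc.ge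
      rw [hint_eq] at hn0
      exact (hts (Finset.mem_coe.mpr hnt)) hn0
    set s0 : Finset ℤ := hSfin.toFinset with hs0
    have hcard0 : s0.card ≤ k := by
      by_contra hcc
      push_neg at hcc
      obtain ⟨n, hn, h0⟩ := hno s0 hcc
      rw [hint_eq] at h0
      exact (hSfin.mem_toFinset.mp hn) h0
    -- the k+1 moment vectors are dependent in a ≤ k dimensional space
    have hdep : ¬ LinearIndependent ℂ
        (fun j : Fin (k+1) => fun n : s0 => (2 * Real.pi * Complex.I * ((n:ℤ):ℂ)) ^ (j:ℕ)) := by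
      intro hLIw
      have h1 := hLIw.fintype_card_le_finrank
      rw [Module.finrank_fintype_fun_eq_card, Fintype.card_coe, Fintype.card_fin] at h1
      omega
    rw [Fintype.not_linearIndependent_iff] at hdep
    obtain ⟨g, hg, i0, hi0⟩ := hdep
    have hkey : ∀ n : ℤ, (∑ j : Fin (k+1), g j * (2 * Real.pi * Complex.I * n) ^ (j:ℕ)) * c n = 0 := by
      intro n
      by_cases hn : n ∈ s0
      · have := congrFun hg ⟨n, hn⟩
        simp only [Finset.sum_apply, Pi.smul_apply, smul_eq_mul, Pi.zero_apply] at this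
        rw [this, zero_mul]
      · have : c n = 0 := by
          by_contra hcn
          exact hn (hSfin.mem_toFinset.mpr hcn)
        rw [this, mul_zero]
    -- build the vanishing combination
    set G : ℝ → ℂ := fun x => ∑ j : Fin (k+1), g j * ((iteratedDeriv (j:ℕ) phi x : ℝ) : ℂ) with hG
    have hGcont : Continuous G := by
      apply continuous_finset_sum
      intro j _
      exact continuous_const.mul (Complex.continuous_ofReal.comp (hcontj j))
    have hGper : Function.Periodic G 1 := by
      intro x
      simp only [hG]
      apply Finset.sum_congr rfl
      intro j _
      rw [periodic_iteratedDeriv hper (j:ℕ) x]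
    have hGcoeff : ∀ n : ℤ, cI G n = 0 := by
      intro n
      rw [hG]
      rw [sum_coeff hsmooth hper g n]
      exact hkey n
    have hG0 : ∀ x, G x = 0 := eq_zero_of_cI_zero hGcont hGper hGcoeff
    -- split into real and imaginary parts
    have hre : ∀ x, ∑ j : Fin (k+1), (g j).re * iteratedDeriv (j:ℕ) phi x = 0 := by
      intro x
      have h := hG0 x
      rw [hG] at h
      have h2 := congrArg Complex.re h
      simpa [Complex.re_sum, Complex.mul_re] using h2
    have him : ∀ x, ∑ j : Fin (k+1), (g j).im * iteratedDeriv (j:ℕ) phi x = 0 := by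
      intro x
      have h := hG0 x
      rw [hG] at h
      have h2 := congrArg Complex.im h
      simpa [Complex.im_sum, Complex.mul_im] using h2
    have hLI' := Fintype.linearIndependent_iff.mp hLI
    have hre0 : ∀ j, (g j).re = 0 := by
      apply hLI'
      funext x
      simpa [Finset.sum_apply] using hre x
    have him0 : ∀ j, (g j).im = 0 := by
      apply hLI'
      funext x
      simpa [Finset.sum_apply] using him x
    exact hi0 (Complex.ext (hre0 i0) (him0 i0))
  · -- many nonzero coefficients → LI
    rintro ⟨s, hcard, hs⟩
    rw [Fintype.linearIndependent_iff]
    intro a ha i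
    have hpt : ∀ x : ℝ, ∑ j : Fin (k+1), ((a j : ℝ) : ℂ) * ((iteratedDeriv (j:ℕ) phi x : ℝ) : ℂ) = 0 := by
      intro x
      have h1 := congrFun ha x
      simp only [Finset.sum_apply, Pi.smul_apply, smul_eq_mul, Pi.zero_apply] at h1
      have h2 : ((∑ j : Fin (k+1), a j * iteratedDeriv (j:ℕ) phi x : ℝ) : ℂ) = 0 := by
        rw [h1]; simp
      push_cast at h2
      exact h2
    have hvand0 := key (fun j => ((a j : ℝ) : ℂ)) hpt
    obtain ⟨t, hts, htc⟩ := Finset.exists_subset_card_eq hcard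
    set ν : Fin (k+1) → ℤ := fun i => ((t.orderIsoOfFin htc i : ℤ)) with hν
    have hνinj : Function.Injective ν := fun i i' h =>
      (t.orderIsoOfFin htc).injective (Subtype.ext h)
    have hcν : ∀ i, c (ν i) ≠ 0 := by
      intro i hzero
      apply hs (ν i) (hts (t.orderIsoOfFin htc i).2)
      rw [hint_eq]
      exact hzero
    have hvand : ∀ i : Fin (k+1),
        ∑ j : Fin (k+1), ((a j : ℝ) : ℂ) * (2 * Real.pi * Complex.I * (ν i)) ^ (j:ℕ) = 0 := by
      intro i
      exact (mul_eq_zero.mp (hvand0 (ν i))).resolve_right (hcν i)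
    have hfinj : Function.Injective (fun i : Fin (k+1) => 2 * (Real.pi:ℂ) * Complex.I * (ν i)) := by
      intro i i' h
      apply hνinj
      have h2 : ((ν i : ℤ) : ℂ) = ((ν i' : ℤ) : ℂ) := by
        have hnz : (2 * (Real.pi:ℂ) * Complex.I) ≠ 0 := by
          simp [Real.pi_ne_zero, Complex.I_ne_zero]
        exact mul_left_cancel₀ hnz h
      exact_mod_cast h2
    have hzero := Matrix.eq_zero_of_forall_index_sum_mul_pow_eq_zero hfinj hvand
    have := congrFun hzero i
    simpa using this
end

section
/- Let φ̃ be the Dirichlet kernel with cutoff frequency f_c ∈ ā„•*, i.e. φ̃(x) = āˆ‘_{|n| ≤ f_c} e^{2iĻ€nx} on 𝕋. Then the derivatives (φ̃, φ̃', …, φ̃^{(k)}) are linearly independent in L²(𝕋) if and only if k ≤ 2f_c. -/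
open Complex Finset

noncomputable def dkc (n : ℤ) : ℂ := ((2 * Real.pi * n : ℝ) : ℂ) * Complex.I

lemma dk_exp_hasDerivAt (a : ℂ) (x : ℝ) :
    HasDerivAt (fun x : ℝ => Complex.exp (a * x)) (a * Complex.exp (a * x)) x := by
  have h1 : HasDerivAt (fun x : ℝ => a * (x : ℂ)) a x := by
    simpa using (Complex.ofRealCLM.hasDerivAt (x := x)).const_mul a
  simpa [mul_comm] using h1.cexp

lemma dk_iteratedDeriv_sum_exp (s : Finset ℤ) (c : ℤ → ℂ) :
    ∀ (j : ℕ) (b : ℤ → ℂ),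
      iteratedDeriv j (fun x : ℝ => ∑ n ∈ s, b n * Complex.exp (c n * x)) =
      fun x : ℝ => ∑ n ∈ s, b n * (c n) ^ j * Complex.exp (c n * x) := by
  intro j
  induction j with
  | zero => intro b; simp
  | succ j ih =>
    intro b
    rw [iteratedDeriv_succ']
    have hder : (deriv fun x : ℝ => ∑ n ∈ s, b n * Complex.exp (c n * x)) =
        fun x : ℝ => ∑ n ∈ s, (b n * c n) * Complex.exp (c n * x) := by
      funext x
      have : HasDerivAt (fun x : ℝ => ∑ n ∈ s, b n * Complex.exp (c n * x))
          (∑ n ∈ s, (b n * c n) * Complex.exp (c n * x)) x := by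
        refine HasDerivAt.fun_sum fun n _ => ?_
        simpa [mul_assoc, mul_comm, mul_left_comm] using ((dk_exp_hasDerivAt (c n) x).const_mul (b n))
      exact this.deriv
    rw [hder, ih (fun n => b n * c n)]
    funext x
    exact Finset.sum_congr rfl fun n _ => by ring

lemma dkc_injective : Function.Injective dkc := by
  intro n m h
  have h2 : ((2 * Real.pi * n : ℝ) : ℂ) = ((2 * Real.pi * m : ℝ) : ℂ) :=
    mul_right_cancel₀ Complex.I_ne_zero h
  have h3 : 2 * Real.pi * (n : ℝ) = 2 * Real.pi * (m : ℝ) := by exact_mod_cast h2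
  have h4 : (n : ℝ) = (m : ℝ) :=
    mul_left_cancel₀ (by positivity : (2 : ℝ) * Real.pi ≠ 0) h3
  exact_mod_cast h4

/-- Dedekind: the exponentials are linearly independent. -/
lemma dk_exp_linearIndependent (s : Finset ℤ) :
    LinearIndependent ℂ (fun n : s => (fun x : ℝ => Complex.exp (dkc n * x))) := by
  let E : ℤ → (Multiplicative ℝ →* ℂ) := fun n =>
    { toFun := fun x => Complex.exp (dkc n * (Multiplicative.toAdd x : ℝ))
      map_one' := by simp
      map_mul' := fun a b => by
        simp [mul_add, Complex.exp_add] }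
  have hinj : Function.Injective fun n : s => E (n : ℤ) := by
    intro n m h
    have h0 : (fun x : ℝ => Complex.exp (dkc n * x)) = fun x : ℝ => Complex.exp (dkc m * x) := by
      funext x
      exact DFunLike.congr_fun h (Multiplicative.ofAdd x)
    have h1 := dk_exp_hasDerivAt (dkc n) 0
    have h2 := dk_exp_hasDerivAt (dkc m) 0
    rw [h0] at h1
    have h3 := h1.unique h2
    simp only [Complex.ofReal_zero, mul_zero, Complex.exp_zero, mul_one] at h3
    exact Subtype.ext (dkc_injective h3)
  exact (linearIndependent_monoidHom (Multiplicative ℝ) ℂ).comp (fun n : s => E (n : ℤ)) hinj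

lemma dk_ofReal_iteratedDeriv {f : ℝ → ℝ} (hf : ContDiff ℝ ⊤ f) (j : ℕ) :
    iteratedDeriv j (fun x : ℝ => ((f x : ℝ) : ℂ)) = fun x => ((iteratedDeriv j f x : ℝ) : ℂ) := by
  induction j with
  | zero => simp
  | succ j ih =>
    rw [iteratedDeriv_succ, iteratedDeriv_succ, ih]
    funext x
    have hdiff : DifferentiableAt ℝ (iteratedDeriv j f) x := by
      have := hf.differentiable_iteratedDeriv j (Ne.lt_top (by simp))
      exact this x
    exact (hdiff.hasDerivAt.ofReal_comp).deriv

/-- For the Dirichlet kernel with cutoff frequency f_c, the derivatives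
(phi, phi', ..., phi^(k)) are linearly independent iff k <= 2 f_c. -/
theorem dirichlet_derivatives_linearIndependent_iff (fc : ℕ) (hfc : 1 ≤ fc)
    (k : ℕ) (phi : ℝ → ℝ)
    (hphi : ∀ x : ℝ, phi x =
      ∑ n ∈ Finset.Icc (-(fc : ℤ)) (fc : ℤ), Real.cos (2 * Real.pi * (n : ℝ) * x)) :
    LinearIndependent ℝ (fun j : Fin (k+1) => iteratedDeriv (j : ℕ) phi) ↔ k ≤ 2 * fc := by
  set s : Finset ℤ := Finset.Icc (-(fc : ℤ)) (fc : ℤ) with hs_def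
  have hscard : s.card = 2 * fc + 1 := by
    rw [hs_def, Int.card_Icc]; omega
  have hphi' : phi = fun x => ∑ n ∈ s, Real.cos (2 * Real.pi * (n : ℝ) * x) := funext hphi
  have hsmooth : ContDiff ℝ ⊤ phi := by
    rw [hphi']
    exact ContDiff.sum fun n _ =>
      Real.contDiff_cos.comp (contDiff_const.mul contDiff_id)
  -- Lemma A: complexification of phi is the sum of exponentials
  have hPhi : (fun x : ℝ => ((phi x : ℝ) : ℂ)) = fun x : ℝ => ∑ n ∈ s, Complex.exp (dkc n * (x : ℂ)) := by
    funext x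
    rw [hphi]
    rw [Complex.ofReal_sum]
    have hterm : ∀ n : ℤ, Complex.exp (dkc n * x) =
        ((Real.cos (2 * Real.pi * n * x) : ℝ) : ℂ) +
        ((Real.sin (2 * Real.pi * n * x) : ℝ) : ℂ) * Complex.I := by
      intro n
      have : dkc n * (x : ℂ) = ((2 * Real.pi * n * x : ℝ) : ℂ) * Complex.I := by
        simp [dkc]; push_cast; ring
      rw [this, Complex.exp_mul_I]
      simp [Complex.ofReal_cos, Complex.ofReal_sin]
    have hsin : ∑ n ∈ s, Real.sin (2 * Real.pi * (n : ℝ) * x) = 0 := by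
      have hneg : ∑ n ∈ s, Real.sin (2 * Real.pi * (n : ℝ) * x) =
          ∑ n ∈ s, -Real.sin (2 * Real.pi * (n : ℝ) * x) := by
        refine Finset.sum_equiv (Equiv.neg ℤ) ?_ ?_
        · intro i; simp [hs_def, Finset.mem_Icc]; omega
        · intro i _
          have : 2 * Real.pi * ((-i : ℤ) : ℝ) * x = -(2 * Real.pi * (i : ℝ) * x) := by
            push_cast; ring
          simp [Equiv.neg_apply, this, Real.sin_neg]
      have := hneg
      rw [Finset.sum_neg_distrib] at this
      linarith
    calc (∑ n ∈ s, ((Real.cos (2 * Real.pi * n * x) : ℝ) : ℂ))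
        = ∑ n ∈ s, (((Real.cos (2 * Real.pi * n * x) : ℝ) : ℂ) +
            ((Real.sin (2 * Real.pi * n * x) : ℝ) : ℂ) * Complex.I) := by
          rw [Finset.sum_add_distrib, ← Finset.sum_mul]
          norm_cast
          rw [hsin]
          simp
      _ = ∑ n ∈ s, Complex.exp (dkc n * x) := by
          exact Finset.sum_congr rfl fun n _ => (hterm n).symm
  -- key iterated derivative formula
  have hIter : ∀ j : ℕ, (fun x : ℝ => ((iteratedDeriv j phi x : ℝ) : ℂ)) =
      fun x : ℝ => ∑ n ∈ s, (dkc n) ^ j * Complex.exp (dkc n * (x : ℂ)) := by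
    intro j
    rw [← dk_ofReal_iteratedDeriv hsmooth j, hPhi]
    have := dk_iteratedDeriv_sum_exp s dkc j (fun _ => 1)
    simpa using this
  constructor
  · -- independent → k ≤ 2 fc
    intro hLI
    by_contra hk
    push_neg at hk
    set F : s → (ℝ → ℂ) := fun n => (fun x : ℝ => Complex.exp (dkc n * x)) with hF_def
    set U : Fin (k+1) → (ℝ → ℂ) := fun j => (fun x => ((iteratedDeriv (j : ℕ) phi x : ℝ) : ℂ))
      with hU_def
    have hUind : LinearIndependent ℂ U := by
      rw [Fintype.linearIndependent_iff]
      intro z hz j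
      have h1 : ∀ x : ℝ, ∑ i : Fin (k+1), z i * ((iteratedDeriv (i : ℕ) phi x : ℝ) : ℂ) = 0 := by
        intro x
        have := congrFun hz x
        simpa [hU_def, Finset.sum_apply] using this
      have hre : ∀ i : Fin (k+1), (z i).re = 0 := by
        apply Fintype.linearIndependent_iff.mp hLI
        funext x
        have := congrArg Complex.re (h1 x)
        simpa [Complex.mul_re, Finset.sum_apply] using this
      have him : ∀ i : Fin (k+1), (z i).im = 0 := by
        apply Fintype.linearIndependent_iff.mp hLI
        funext x
        have := congrArg Complex.im (h1 x)
        simpa [Complex.mul_im, Finset.sum_apply] using this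
      exact Complex.ext (hre j) (him j)
    have hU : ∀ j : Fin (k+1), U j ∈ Submodule.span ℂ (Set.range F) := by
      intro j
      have : U j = ∑ n ∈ s.attach, (dkc n) ^ (j : ℕ) • F n := by
        rw [hU_def]
        simp only [hIter (j : ℕ)]
        funext x
        simp only [Finset.sum_apply, Pi.smul_apply, hF_def, smul_eq_mul]
        rw [Finset.sum_attach s (fun n => (dkc n) ^ (j : ℕ) * Complex.exp (dkc n * (x : ℂ)))]
      rw [this]
      exact Submodule.sum_mem _ fun n _ =>
        Submodule.smul_mem _ _ (Submodule.subset_span ⟨n, rfl⟩)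
    set W := Submodule.span ℂ (Set.range F) with hW_def
    haveI : Module.Finite ℂ W := FiniteDimensional.span_of_finite ℂ (Set.finite_range F)
    have hfr : Module.finrank ℂ W ≤ s.card := by
      have := finrank_range_le_card (R := ℂ) F
      simpa [hW_def, Fintype.card_coe, Set.finrank] using this
    let V : Fin (k+1) → W := fun j => ⟨U j, hU j⟩
    have hVind : LinearIndependent ℂ V := by
      apply LinearIndependent.of_comp W.subtype
      exact hUind
    have hcard := hVind.fintype_card_le_finrank
    simp only [Fintype.card_fin] at hcard
    omega
  · -- k ≤ 2 fc → independent
    intro hk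
    rw [Fintype.linearIndependent_iff]
    intro g hg j
    -- complexified vanishing
    have h1 : ∀ x : ℝ,
        ∑ n ∈ s, (∑ i : Fin (k+1), (g i : ℂ) * (dkc n) ^ (i : ℕ)) * Complex.exp (dkc n * x)
          = 0 := by
      intro x
      have hgx : ∑ i : Fin (k+1), g i * iteratedDeriv (i : ℕ) phi x = 0 := by
        have := congrFun hg x
        simpa [Finset.sum_apply] using this
      have hc : ∑ i : Fin (k+1), (g i : ℂ) * ((iteratedDeriv (i : ℕ) phi x : ℝ) : ℂ) = 0 := by
        exact_mod_cast congrArg (fun r : ℝ => ((r : ℝ) : ℂ)) hgx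
      calc ∑ n ∈ s, (∑ i : Fin (k+1), (g i : ℂ) * (dkc n) ^ (i : ℕ)) * Complex.exp (dkc n * x)
          = ∑ i : Fin (k+1), (g i : ℂ) * (∑ n ∈ s, (dkc n) ^ (i : ℕ) * Complex.exp (dkc n * x)) := by
            simp_rw [Finset.sum_mul]
            rw [Finset.sum_comm]
            refine Finset.sum_congr rfl fun i _ => ?_
            rw [Finset.mul_sum]
            refine Finset.sum_congr rfl fun n _ => by ring
        _ = ∑ i : Fin (k+1), (g i : ℂ) * ((iteratedDeriv (i : ℕ) phi x : ℝ) : ℂ) := by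
            refine Finset.sum_congr rfl fun i _ => ?_
            rw [← congrFun (hIter (i : ℕ)) x]
        _ = 0 := hc
    -- use linear independence of exponentials
    have hw : ∀ n : s, (∑ i : Fin (k+1), (g i : ℂ) * (dkc (n : ℤ)) ^ (i : ℕ)) = 0 := by
      apply Fintype.linearIndependent_iff.mp (dk_exp_linearIndependent s)
      funext x
      simp only [Finset.sum_apply, Pi.smul_apply, smul_eq_mul, Pi.zero_apply]
      rw [Finset.sum_coe_sort s
        (fun n => (∑ i : Fin (k+1), (g i : ℂ) * (dkc n) ^ (i : ℕ)) * Complex.exp (dkc n * (x : ℂ)))]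
      exact h1 x
    -- polynomial argument
    set p : Polynomial ℂ := ∑ i : Fin (k+1), Polynomial.C ((g i : ℂ)) * Polynomial.X ^ (i : ℕ)
      with hp_def
    have heval : ∀ z ∈ s.image dkc, p.eval z = 0 := by
      intro z hz
      obtain ⟨n, hn, rfl⟩ := Finset.mem_image.mp hz
      have := hw ⟨n, hn⟩
      rw [hp_def]
      simpa [Polynomial.eval_finset_sum] using this
    have hdeg : p.natDegree ≤ k := by
      rw [hp_def]
      refine Polynomial.natDegree_sum_le_of_forall_le _ _ fun i _ => ?_
      exact (Polynomial.natDegree_C_mul_X_pow_le _ _).trans (Nat.lt_succ_iff.mp i.isLt)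
    have hcard : (s.image dkc).card = 2 * fc + 1 := by
      rw [Finset.card_image_of_injective _ dkc_injective, hscard]
    have hp0 : p = 0 := by
      apply Polynomial.eq_zero_of_natDegree_lt_card_of_eval_eq_zero' p (s.image dkc) heval
      rw [hcard]; omega
    have hcoeff : (g j : ℂ) = 0 := by
      have := congrArg (fun q => Polynomial.coeff q (j : ℕ)) hp0
      simp only [hp_def, Polynomial.finset_sum_coeff, Polynomial.coeff_C_mul,
        Polynomial.coeff_X_pow, Polynomial.coeff_zero, mul_ite, mul_one, mul_zero] at this
      rw [Finset.sum_eq_single j (fun i _ hij => by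
        simp [Fin.val_eq_val, Ne.symm hij]) (by simp)] at this
      simpa using this
    exact_mod_cast hcoeff
end
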